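/- Let G be a finite p-group and U₁ ≤ U₂ two normal subgroups of G. Then for every finitely generated F_p[G]-module M, dim_{F_p}(F_p ⊗_{F_p[U₁]} M)/|G:U₁| ≤ dim_{F_p}(F_p ⊗_{F_p[U₂]} M)/|G:U₂|. -/

import Mathlib

/-- Cardinality of a finite module over a group algebra in terms of the restricted finrank. -/
lemma aux_card (p : ℕ) [Fact p.Prime] (G : Type) [Group G] (X : Type) [AddCommGroup X]
    [Module (MonoidAlgebra (ZMod p) G) X] [Finite X] :
    Nat.card X = p ^ Module.finrank (ZMod p)
      (RestrictScalars (ZMod p) (MonoidAlgebra (ZMod p) G) X) := by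
  set A := MonoidAlgebra (ZMod p) G
  haveI : Finite (RestrictScalars (ZMod p) A X) :=
    Finite.of_equiv X (RestrictScalars.addEquiv (ZMod p) A X).symm.toEquiv
  haveI := Fintype.ofFinite (RestrictScalars (ZMod p) A X)
  have h := @Module.card_eq_pow_finrank (ZMod p) (RestrictScalars (ZMod p) (MonoidAlgebra (ZMod p) G) X) _ _ (by exact (RestrictScalars.module (ZMod p) (MonoidAlgebra (ZMod p) G) X : Module (ZMod p) (RestrictScalars (ZMod p) (MonoidAlgebra (ZMod p) G) X))) _ _
  rw [ZMod.card] at h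
  calc Nat.card X = Nat.card (RestrictScalars (ZMod p) A X) :=
        Nat.card_congr (RestrictScalars.addEquiv (ZMod p) A X).toEquiv.symm
    _ = p ^ _ := by rw [Nat.card_eq_fintype_card]; exact h


lemma aux_subsingleton (p : ℕ) [Fact p.Prime] (Q : Type) [Group Q] (hQ : IsPGroup p Q) :
    ∀ (n : ℕ) (X : Type) [AddCommGroup X] [Module (MonoidAlgebra (ZMod p) Q) X],
      Finite X → Nat.card X ≤ n →
      Submodule.span (MonoidAlgebra (ZMod p) Q)
        {x : X | ∃ q : Q, ∃ y : X, x = MonoidAlgebra.of (ZMod p) Q q • y - y} = ⊤ →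
      Subsingleton X := by
  intro n
  induction n with
  | zero =>
    intro X _ _ hfin hcard _
    have : Nonempty X := ⟨0⟩
    have := Nat.card_pos (α := X)
    omega
  | succ n ih =>
    intro X _ _ hfin hcard hspan
    by_contra hns
    rw [not_subsingleton_iff_nontrivial] at hns
    set B := MonoidAlgebra (ZMod p) Q with hB
    -- closure of fixed points under scalars
    have smul_mem_fixed : ∀ (b : B) (x : X),
        (∀ q : Q, MonoidAlgebra.of (ZMod p) Q q • x = x) →
        ∀ q : Q, MonoidAlgebra.of (ZMod p) Q q • (b • x) = b • x := by
      intro b x hx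
      induction b using MonoidAlgebra.induction_on with
      | of g =>
        intro q
        rw [← mul_smul, ← map_mul, show q * g = g * (g⁻¹ * q * g) by group, map_mul, mul_smul,
          hx (g⁻¹ * q * g)]
      | add f g hf hg =>
        intro q
        rw [add_smul, smul_add, hf q, hg q, ← add_smul]
      | smul r f hf =>
        intro q
        have hcomm : MonoidAlgebra.of (ZMod p) Q q * (algebraMap (ZMod p) B r) =
            (algebraMap (ZMod p) B r) * MonoidAlgebra.of (ZMod p) Q q :=
          (Algebra.commutes r _).symm
        rw [Algebra.smul_def, mul_smul, ← mul_smul, hcomm, mul_smul, hf q]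
    set F : Submodule B X :=
      { carrier := {x : X | ∀ q : Q, MonoidAlgebra.of (ZMod p) Q q • x = x}
        add_mem' := fun {a b} ha hb q => by rw [smul_add, ha q, hb q]
        zero_mem' := fun q => smul_zero _
        smul_mem' := fun b {x} hx => smul_mem_fixed b x hx } with hF
    letI : MulAction Q X :=
      { smul := fun q x => MonoidAlgebra.of (ZMod p) Q q • x
        one_smul := fun x => show MonoidAlgebra.of (ZMod p) Q 1 • x = x by
          rw [map_one, one_smul]
        mul_smul := fun a b x =>
          show MonoidAlgebra.of (ZMod p) Q (a * b) • x
              = MonoidAlgebra.of (ZMod p) Q a • (MonoidAlgebra.of (ZMod p) Q b • x) by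
            rw [map_mul, mul_smul] }
    haveI := Fintype.ofFinite X
    letI : Module (ZMod p) X := Module.compHom X (algebraMap (ZMod p) B)
    have hcardX : Fintype.card X = p ^ Module.finrank (ZMod p) X := by
      have h := Module.card_eq_pow_finrank (K := ZMod p) (V := X)
      rwa [ZMod.card] at h
    have hpX : p ∣ Fintype.card X := by
      rcases Nat.eq_zero_or_pos (Module.finrank (ZMod p) X) with h0 | hpos
      · rw [h0, pow_zero] at hcardX
        exact absurd hcardX (Fintype.one_lt_card).ne'
      · rw [hcardX]; exact dvd_pow_self p hpos.ne'
    have hfix := hQ.card_modEq_card_fixedPoints X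
    have hdvd : p ∣ Nat.card (MulAction.fixedPoints Q X) := by
      have h0 : Nat.card X ≡ 0 [MOD p] := by
        rw [Nat.card_eq_fintype_card]
        exact (Nat.modEq_zero_iff_dvd).mpr hpX
      exact (Nat.modEq_zero_iff_dvd).mp (hfix.symm.trans h0)
    have h0mem : (0 : X) ∈ MulAction.fixedPoints Q X := fun q =>
      show MonoidAlgebra.of (ZMod p) Q q • (0 : X) = 0 from smul_zero _
    have hone_lt : 1 < Nat.card (MulAction.fixedPoints Q X) := by
      have hpos : 0 < Nat.card (MulAction.fixedPoints Q X) := by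
        haveI : Nonempty (MulAction.fixedPoints Q X) := ⟨⟨0, h0mem⟩⟩
        exact Nat.card_pos
      have hp2 := (Fact.out : p.Prime).two_le
      rcases hdvd with ⟨k, hk⟩
      rcases Nat.eq_zero_or_pos k with rfl | hkpos
      · omega
      · calc 1 < p := by omega
          _ ≤ p * k := Nat.le_mul_of_pos_right p hkpos
          _ = _ := hk.symm
    haveI : Nontrivial (MulAction.fixedPoints Q X) :=
      Finite.one_lt_card_iff_nontrivial.mp hone_lt
    obtain ⟨y, hyne⟩ := exists_ne (⟨0, h0mem⟩ : MulAction.fixedPoints Q X)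
    have hyF : (y : X) ∈ F := fun q => y.2 q
    have hy0 : (y : X) ≠ 0 := fun h => hyne (Subtype.ext h)
    haveI : Finite (X ⧸ F) := Finite.of_surjective _ F.mkQ_surjective
    have hcard_lt : Nat.card (X ⧸ F) < Nat.card X := by
      have hle := Nat.card_le_card_of_surjective _ F.mkQ_surjective
      rcases hle.lt_or_eq with h | h
      · exact h
      · exfalso
        have hbij : Function.Bijective F.mkQ :=
          (Nat.bijective_iff_surjective_and_card _).mpr ⟨F.mkQ_surjective, h.symm⟩
        have : (y : X) = 0 := hbij.injective (by
          rw [map_zero]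
          exact (Submodule.Quotient.mk_eq_zero F).mpr hyF)
        exact hy0 this
    have hspan' : Submodule.span B
        {z : X ⧸ F | ∃ q : Q, ∃ w : X ⧸ F, z = MonoidAlgebra.of (ZMod p) Q q • w - w} = ⊤ := by
      rw [eq_top_iff]
      have hm : Submodule.map F.mkQ (Submodule.span B
          {x : X | ∃ q : Q, ∃ y : X, x = MonoidAlgebra.of (ZMod p) Q q • y - y}) ≤
          Submodule.span B
            {z : X ⧸ F | ∃ q : Q, ∃ w : X ⧸ F, z = MonoidAlgebra.of (ZMod p) Q q • w - w} := by
        rw [Submodule.map_span]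
        refine Submodule.span_mono ?_
        rintro z ⟨w, ⟨q, y, rfl⟩, rfl⟩
        exact ⟨q, F.mkQ y, by rw [map_sub, map_smul]⟩
      rwa [hspan, Submodule.map_top, Submodule.range_mkQ] at hm
    haveI hsub : Subsingleton (X ⧸ F) := by
      refine ih (X ⧸ F) inferInstance ?_ hspan'
      omega
    have hFtop : F = ⊤ := Submodule.Quotient.subsingleton_iff.mp hsub
    have hbot : Submodule.span B
        {x : X | ∃ q : Q, ∃ y : X, x = MonoidAlgebra.of (ZMod p) Q q • y - y} ≤ ⊥ := by
      refine Submodule.span_le.mpr ?_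
      rintro z ⟨q, w, rfl⟩
      have hw : w ∈ F := hFtop ▸ Submodule.mem_top
      have hqw : MonoidAlgebra.of (ZMod p) Q q • w = w := hw q
      show MonoidAlgebra.of (ZMod p) Q q • w - w ∈ (⊥ : Submodule B X)
      rw [Submodule.mem_bot, hqw, sub_self]
    rw [hspan] at hbot
    exact hy0 (by simpa using hbot (Submodule.mem_top (x := (y : X))))
/-- Nakayama-type lemma for `p`-groups. -/
lemma aux_nakayama (p : ℕ) [Fact p.Prime] (Q : Type) [Group Q] (hQ : IsPGroup p Q)
    (X : Type) [AddCommGroup X] [Module (MonoidAlgebra (ZMod p) Q) X] [Finite X]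
    (W : Submodule (MonoidAlgebra (ZMod p) Q) X)
    (h : W ⊔ Submodule.span (MonoidAlgebra (ZMod p) Q)
      {x : X | ∃ q : Q, ∃ y : X, x = MonoidAlgebra.of (ZMod p) Q q • y - y} = ⊤) :
    W = ⊤ := by
  haveI : Finite (X ⧸ W) := Finite.of_surjective _ W.mkQ_surjective
  have hspan' : Submodule.span (MonoidAlgebra (ZMod p) Q)
      {z : X ⧸ W | ∃ q : Q, ∃ w : X ⧸ W, z = MonoidAlgebra.of (ZMod p) Q q • w - w} = ⊤ := by
    rw [eq_top_iff]
    have hm : Submodule.map W.mkQ (W ⊔ Submodule.span (MonoidAlgebra (ZMod p) Q)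
        {x : X | ∃ q : Q, ∃ y : X, x = MonoidAlgebra.of (ZMod p) Q q • y - y}) ≤
        Submodule.span (MonoidAlgebra (ZMod p) Q)
          {z : X ⧸ W | ∃ q : Q, ∃ w : X ⧸ W, z = MonoidAlgebra.of (ZMod p) Q q • w - w} := by
      rw [Submodule.map_sup, Submodule.map_span]
      refine sup_le ?_ (Submodule.span_le.mpr ?_)
      · intro z hz
        obtain ⟨w, hw, rfl⟩ := Submodule.mem_map.mp hz
        have : W.mkQ w = 0 := (Submodule.Quotient.mk_eq_zero W).mpr hw
        rw [this]
        exact Submodule.zero_mem _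
      · rintro z ⟨w, ⟨q, y, rfl⟩, rfl⟩
        exact Submodule.subset_span ⟨q, W.mkQ y, by rw [map_sub, map_smul]⟩
    rwa [h, Submodule.map_top, Submodule.range_mkQ] at hm
  haveI := aux_subsingleton p Q hQ (Nat.card (X ⧸ W)) (X ⧸ W) inferInstance le_rfl hspan'
  exact Submodule.Quotient.subsingleton_iff.mp this

lemma aux_sum_single {α R : Type*} [Fintype α] [Semiring R] (c : α →₀ R) :
    ∑ u, Finsupp.single u (c u) = c := by
  ext a
  rw [Finset.sum_apply']
  rw [Finset.sum_eq_single a (fun b _ hb => Finsupp.single_eq_of_ne' hb) (by simp)]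
  simp

instance aux_coeFunMA {R M : Type*} [Semiring R] : CoeFun (MonoidAlgebra R M) (fun _ => M → R) :=
  ⟨fun x => x.coeff⟩

lemma aux_sum_single_ma {α R : Type*} [Fintype α] [Semiring R] (c : MonoidAlgebra R α) :
    ∑ u, MonoidAlgebra.single u (c u) = c := by
  apply MonoidAlgebra.coeff_injective
  rw [MonoidAlgebra.coeff_sum]
  exact aux_sum_single c.coeff


lemma aux_conj (p : ℕ) [Fact p.Prime] (G : Type) [Group G] (U : Subgroup G) (hU : U.Normal)
    (g : G) (b : MonoidAlgebra (ZMod p) ↥U) :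
    ∃ b' : MonoidAlgebra (ZMod p) ↥U,
      MonoidAlgebra.of (ZMod p) G g * MonoidAlgebra.mapDomainRingHom (ZMod p) U.subtype b
        = MonoidAlgebra.mapDomainRingHom (ZMod p) U.subtype b' * MonoidAlgebra.of (ZMod p) G g := by
  induction b using MonoidAlgebra.induction_linear with
  | zero => exact ⟨0, by simp⟩
  | add f h hf hh =>
    obtain ⟨f', hf'⟩ := hf; obtain ⟨h', hh'⟩ := hh
    exact ⟨f' + h', by rw [map_add, mul_add, hf', hh', map_add, add_mul]⟩
  | single u r =>
    refine ⟨MonoidAlgebra.single ⟨g * ↑u * g⁻¹, hU.conj_mem ↑u u.2 g⟩ r, ?_⟩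
    have h1 : (MonoidAlgebra.mapDomainRingHom (ZMod p) U.subtype) (MonoidAlgebra.single u r)
        = MonoidAlgebra.single (↑u : G) r := by
      simp [MonoidAlgebra.mapDomainRingHom_apply, MonoidAlgebra.mapDomain_single]
    have h2 : (MonoidAlgebra.mapDomainRingHom (ZMod p) U.subtype)
        (MonoidAlgebra.single (⟨g * ↑u * g⁻¹, hU.conj_mem ↑u u.2 g⟩ : ↥U) r)
        = MonoidAlgebra.single (g * ↑u * g⁻¹ : G) r := by
      simp [MonoidAlgebra.mapDomainRingHom_apply, MonoidAlgebra.mapDomain_single]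
    rw [h1, h2, MonoidAlgebra.of_apply]
    show MonoidAlgebra.single g 1 * MonoidAlgebra.single (↑u : G) r
        = MonoidAlgebra.single (g * ↑u * g⁻¹ : G) r * MonoidAlgebra.single g 1
    rw [MonoidAlgebra.single_mul_single, MonoidAlgebra.single_mul_single, one_mul, mul_one]
    congr 1
    group

lemma aux_mapdom (p : ℕ) [Fact p.Prime] (G : Type) [Group G] (U : Subgroup G) (u : ↥U)
    (x : ZMod p) :
    MonoidAlgebra.mapDomainRingHom (ZMod p) U.subtype (MonoidAlgebra.single u x)
      = MonoidAlgebra.single (↑u : G) x := by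
  show MonoidAlgebra.mapDomain (⇑U.subtype) (MonoidAlgebra.single u x) = _
  rw [MonoidAlgebra.mapDomain_single]
  rfl

/-- For a module `M` over a group algebra `K[G]` and a subgroup `U ≤ G`, the submodule
generated by the elements `u • m - m` (`u ∈ U`, `m ∈ M`); the quotient by it is the
module of `U`-coinvariants `K ⊗_{K[U]} M`. -/
noncomputable def coinvKer (K : Type) [Field K] (G : Type) [Group G] (U : Subgroup G)
    (M : Type) [AddCommGroup M] [Module (MonoidAlgebra K G) M] :
    Submodule (MonoidAlgebra K G) M :=
  Submodule.span (MonoidAlgebra K G)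
    {x : M | ∃ u ∈ U, ∃ m : M, x = (MonoidAlgebra.of K G u) • m - m}

/-- The normalized dimension of the `U`-coinvariants of `M`:
`dim_{𝔽_p}(𝔽_p ⊗_{𝔽_p[U]} M) / |G : U|`. -/
noncomputable def normCoinvDim (p : ℕ) [Fact p.Prime] (G : Type) [Group G] (U : Subgroup G)
    (M : Type) [AddCommGroup M] [Module (MonoidAlgebra (ZMod p) G) M] : ℝ :=
  (Module.finrank (ZMod p)
      (RestrictScalars (ZMod p) (MonoidAlgebra (ZMod p) G)
        (M ⧸ coinvKer (ZMod p) G U M)) : ℝ) / (U.index : ℝ)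

set_option maxHeartbeats 1000000 in
/-- Let `G` be a finite `p`-group and `U₁ ≤ U₂` two normal subgroups.
Then for every finitely generated `𝔽_p[G]`-module `M`,
`dim_{𝔽_p}(𝔽_p ⊗_{𝔽_p[U₁]} M)/|G:U₁| ≤ dim_{𝔽_p}(𝔽_p ⊗_{𝔽_p[U₂]} M)/|G:U₂|`. -/
theorem stmt14 (p : ℕ) [Fact p.Prime] (G : Type) [Group G] [Finite G]
    (hG : IsPGroup p G)
    (U₁ U₂ : Subgroup G) (h12 : U₁ ≤ U₂) (h1 : U₁.Normal) (h2 : U₂.Normal)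
    (M : Type) [AddCommGroup M] [Module (MonoidAlgebra (ZMod p) G) M]
    (hM : Module.Finite (MonoidAlgebra (ZMod p) G) M) :
    normCoinvDim p G U₁ M ≤ normCoinvDim p G U₂ M := by
  classical
  have hp1 : 1 < p := (Fact.out : p.Prime).one_lt
  set A := MonoidAlgebra (ZMod p) G with hA
  haveI : Finite A := Finite.of_equiv (G → ZMod p) ((Finsupp.equivFunOnFinite).symm.trans MonoidAlgebra.coeffEquiv.symm)
  haveI : Finite M := Module.finite_of_finite A
  set K₁ := coinvKer (ZMod p) G U₁ M with hK₁
  set K₂ := coinvKer (ZMod p) G U₂ M with hK₂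
  have hK12 : K₁ ≤ K₂ := by
    refine Submodule.span_mono ?_
    rintro x ⟨u, hu, m, rfl⟩
    exact ⟨u, h12 hu, m, rfl⟩
  haveI : Finite (M ⧸ K₁) := Finite.of_surjective _ K₁.mkQ_surjective
  haveI : Finite (M ⧸ K₂) := Finite.of_surjective _ K₂.mkQ_surjective
  set J : Submodule A (M ⧸ K₁) := Submodule.map K₁.mkQ K₂ with hJdef
  haveI : Finite ((M ⧸ K₁) ⧸ J) := Finite.of_surjective _ J.mkQ_surjective
  have hJspan : J = Submodule.span A
      {x : M ⧸ K₁ | ∃ u ∈ U₂, ∃ y : M ⧸ K₁, x = MonoidAlgebra.of (ZMod p) G u • y - y} := by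
    rw [hJdef, hK₂]
    unfold coinvKer
    rw [Submodule.map_span]
    congr 1
    ext z
    constructor
    · rintro ⟨w, ⟨u, hu, m, rfl⟩, rfl⟩
      exact ⟨u, hu, K₁.mkQ m, by rw [map_sub, map_smul]⟩
    · rintro ⟨u, hu, y, rfl⟩
      obtain ⟨m, rfl⟩ := K₁.mkQ_surjective y
      exact ⟨_, ⟨u, hu, m, rfl⟩, by rw [map_sub, map_smul]⟩
  have hc1 : Nat.card (M ⧸ K₁)
      = p ^ Module.finrank (ZMod p) (RestrictScalars (ZMod p) A (M ⧸ K₁)) := aux_card p G _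
  have hc2 : Nat.card (M ⧸ K₂)
      = p ^ Module.finrank (ZMod p) (RestrictScalars (ZMod p) A (M ⧸ K₂)) := aux_card p G _
  have hcJ : Nat.card ((M ⧸ K₁) ⧸ J) = Nat.card (M ⧸ K₂) :=
    Nat.card_congr (Submodule.quotientQuotientEquivQuotient K₁ K₂ hK12).toEquiv
  letI : Module (ZMod p) ((M ⧸ K₁) ⧸ J) := Module.compHom _ (algebraMap (ZMod p) A)
  have hcf : Nat.card ((M ⧸ K₁) ⧸ J) = p ^ Module.finrank (ZMod p) ((M ⧸ K₁) ⧸ J) := by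
    haveI := Fintype.ofFinite ((M ⧸ K₁) ⧸ J)
    rw [Nat.card_eq_fintype_card]
    have h := Module.card_eq_pow_finrank (K := ZMod p) (V := (M ⧸ K₁) ⧸ J)
    rwa [ZMod.card] at h
  have hfd2 : Module.finrank (ZMod p) ((M ⧸ K₁) ⧸ J)
      = Module.finrank (ZMod p) (RestrictScalars (ZMod p) A (M ⧸ K₂)) := by
    apply Nat.pow_right_injective hp1
    show p ^ _ = p ^ _
    rw [← hcf, hcJ, hc2]
  haveI : Module.Finite (ZMod p) ((M ⧸ K₁) ⧸ J) := inferInstance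
  set f := Module.finrank (ZMod p) ((M ⧸ K₁) ⧸ J) with hfdef
  let bV : Module.Basis (Fin f) (ZMod p) ((M ⧸ K₁) ⧸ J) := Module.finBasis (ZMod p) _
  have hlift : ∀ i : Fin f, ∃ m : M ⧸ K₁, J.mkQ m = bV i := fun i => J.mkQ_surjective (bV i)
  choose b hb using hlift
  set B₂ := MonoidAlgebra (ZMod p) ↥U₂ with hB₂
  set φ := MonoidAlgebra.mapDomainRingHom (ZMod p) U₂.subtype with hφ
  letI : Module B₂ (M ⧸ K₁) := Module.compHom _ φ
  have hsm : ∀ (c : B₂) (n : M ⧸ K₁), c • n = φ c • n := fun _ _ => rfl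
  have hofφ : ∀ u : ↥U₂,
      φ (MonoidAlgebra.of (ZMod p) ↥U₂ u) = MonoidAlgebra.of (ZMod p) G ↑u := by
    intro u
    rw [hφ, show MonoidAlgebra.of (ZMod p) ↥U₂ u = MonoidAlgebra.single u (1 : ZMod p) from rfl,
      aux_mapdom p G U₂ u 1]
    rfl
  have hφalg : ∀ r : ZMod p,
      φ (algebraMap (ZMod p) B₂ r) = algebraMap (ZMod p) A r := by
    intro r
    rw [hφ, show (algebraMap (ZMod p) B₂) r = MonoidAlgebra.single (1 : ↥U₂) r from rfl,
      aux_mapdom p G U₂ 1 r, OneMemClass.coe_one]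
    rfl
  have htriv : ∀ u ∈ U₁, ∀ n : M ⧸ K₁, MonoidAlgebra.of (ZMod p) G u • n = n := by
    intro u hu n
    obtain ⟨m, rfl⟩ := K₁.mkQ_surjective n
    have hmem : MonoidAlgebra.of (ZMod p) G u • m - m ∈ K₁ :=
      Submodule.subset_span ⟨u, hu, m, rfl⟩
    have h0 : K₁.mkQ (MonoidAlgebra.of (ZMod p) G u • m - m) = 0 :=
      (Submodule.Quotient.mk_eq_zero K₁).mpr hmem
    rw [map_sub, map_smul] at h0
    exact sub_eq_zero.mp h0
  set SB : Set (M ⧸ K₁) :=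
    {x : M ⧸ K₁ | ∃ q : ↥U₂, ∃ y : M ⧸ K₁, x = MonoidAlgebra.of (ZMod p) ↥U₂ q • y - y}
    with hSB
  have hgens : SB = {x : M ⧸ K₁ | ∃ u ∈ U₂, ∃ y : M ⧸ K₁,
      x = MonoidAlgebra.of (ZMod p) G u • y - y} := by
    ext x
    constructor
    · rintro ⟨q, y, rfl⟩
      exact ⟨↑q, q.2, y, by rw [hsm, hofφ]⟩
    · rintro ⟨u, hu, y, rfl⟩
      exact ⟨⟨u, hu⟩, y, by rw [hsm, hofφ]⟩
  have hstabG : ∀ (g : G) (x : M ⧸ K₁), x ∈ Submodule.span B₂ SB →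
      MonoidAlgebra.of (ZMod p) G g • x ∈ Submodule.span B₂ SB := by
    intro g x hx
    induction hx using Submodule.span_induction with
    | mem z hz =>
      obtain ⟨q, y, rfl⟩ := hz
      rw [hsm, hofφ]
      have hcalc : MonoidAlgebra.of (ZMod p) G g • (MonoidAlgebra.of (ZMod p) G ↑q • y - y)
          = MonoidAlgebra.of (ZMod p) G (g * ↑q * g⁻¹) •
              (MonoidAlgebra.of (ZMod p) G g • y)
            - MonoidAlgebra.of (ZMod p) G g • y := by
        rw [smul_sub, ← mul_smul, ← map_mul, ← mul_smul, ← map_mul]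
        congr 2
        group
      rw [hcalc]
      refine Submodule.subset_span
        ⟨⟨g * ↑q * g⁻¹, h2.conj_mem ↑q q.2 g⟩, MonoidAlgebra.of (ZMod p) G g • y, ?_⟩
      rw [hsm, hofφ]
    | zero => rw [smul_zero]; exact Submodule.zero_mem _
    | add a b ha hb iha ihb => rw [smul_add]; exact Submodule.add_mem _ iha ihb
    | smul c z hz ihz =>
      rw [hsm, ← mul_smul]
      obtain ⟨c', hc'⟩ := aux_conj p G U₂ h2 g c
      rw [← hφ] at hc'
      rw [hc', mul_smul]
      have hmem := Submodule.smul_mem (Submodule.span B₂ SB) c' ihz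
      rwa [hsm] at hmem
  have hspanAB : ∀ x ∈ Submodule.span A
      {x : M ⧸ K₁ | ∃ u ∈ U₂, ∃ y : M ⧸ K₁, x = MonoidAlgebra.of (ZMod p) G u • y - y},
      x ∈ Submodule.span B₂ SB := by
    intro x hx
    induction hx using Submodule.span_induction with
    | mem z hz => exact Submodule.subset_span (by rw [hgens]; exact hz)
    | zero => exact Submodule.zero_mem _
    | add a b ha hb iha ihb => exact Submodule.add_mem _ iha ihb
    | smul a z hz ihz =>
      induction a using MonoidAlgebra.induction_on with
      | of g => exact hstabG g z ihz
      | add a₁ a₂ h₁ h₂ => rw [add_smul]; exact Submodule.add_mem _ h₁ h₂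
      | smul r a' h' =>
        rw [Algebra.smul_def, mul_smul]
        have hmem := Submodule.smul_mem (Submodule.span B₂ SB) (algebraMap (ZMod p) B₂ r) h'
        rwa [hsm, hφalg] at hmem
  set W : Submodule B₂ (M ⧸ K₁) := Submodule.span B₂ (Set.range b) with hW
  have hWtop : W = ⊤ := by
    apply aux_nakayama p ↥U₂ (hG.to_subgroup U₂) _ W
    rw [eq_top_iff]
    intro n _
    have hrepr : ∑ i, bV.repr (J.mkQ n) i • bV i = J.mkQ n := bV.sum_repr (J.mkQ n)
    set s : M ⧸ K₁ := ∑ i, algebraMap (ZMod p) A (bV.repr (J.mkQ n) i) • b i with hs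
    have hsW : s ∈ W := by
      refine Submodule.sum_mem _ fun i _ => ?_
      have hmem : b i ∈ W := Submodule.subset_span ⟨i, rfl⟩
      have h' := Submodule.smul_mem W (algebraMap (ZMod p) B₂ (bV.repr (J.mkQ n) i)) hmem
      rwa [hsm, hφalg] at h'
    have hdiff : n - s ∈ J := by
      have h0 : J.mkQ (n - s) = 0 := by
        rw [map_sub, hs, map_sum]
        have hterm : ∀ i ∈ Finset.univ,
            J.mkQ (algebraMap (ZMod p) A (bV.repr (J.mkQ n) i) • b i)
            = bV.repr (J.mkQ n) i • bV i := by
          intro i _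
          rw [map_smul, hb i]
          rfl
        rw [Finset.sum_congr rfl hterm, hrepr, sub_self]
      exact (Submodule.Quotient.mk_eq_zero J).mp h0
    have hdiff' : n - s ∈ Submodule.span B₂ SB := by
      refine hspanAB _ ?_
      rw [← hJspan]
      exact hdiff
    have hn : n = s + (n - s) := by abel
    rw [hn]
    exact Submodule.add_mem_sup hsW hdiff'
  -- transversal and counting
  set Hsub := U₁.subgroupOf U₂ with hHsub
  haveI : Finite (↥U₂ ⧸ Hsub) := Finite.of_surjective _ (QuotientGroup.mk_surjective)
  haveI := Fintype.ofFinite (↥U₂ ⧸ Hsub)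
  haveI := Fintype.ofFinite ↥U₂
  have hrep : ∀ u : ↥U₂, ∀ n : M ⧸ K₁,
      MonoidAlgebra.of (ZMod p) G ↑u • n
        = MonoidAlgebra.of (ZMod p) G ↑((QuotientGroup.mk u : ↥U₂ ⧸ Hsub).out) • n := by
    intro u n
    set t := (QuotientGroup.mk u : ↥U₂ ⧸ Hsub).out with ht
    have hmk : (QuotientGroup.mk t : ↥U₂ ⧸ Hsub) = QuotientGroup.mk u := by
      rw [ht, QuotientGroup.out_eq']
    have htu : t⁻¹ * u ∈ Hsub := QuotientGroup.eq.mp hmk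
    have hU1 : ((t⁻¹ * u : ↥U₂) : G) ∈ U₁ := htu
    have hu' : (↑u : G) = ↑t * ↑(t⁻¹ * u) := by push_cast; group
    rw [hu', map_mul, mul_smul, htriv _ hU1]
  set r := Nat.card (↥U₂ ⧸ Hsub) with hr
  set Φ : ((↥U₂ ⧸ Hsub) × Fin f → ZMod p) → (M ⧸ K₁) := fun a =>
    ∑ ji : (↥U₂ ⧸ Hsub) × Fin f,
      algebraMap (ZMod p) A (a ji) • (MonoidAlgebra.of (ZMod p) G ↑(ji.1.out) • b ji.2)
    with hΦ
  have hsurj : Function.Surjective Φ := by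
    intro n
    have hnW : n ∈ W := by rw [hWtop]; exact Submodule.mem_top
    rw [hW] at hnW
    obtain ⟨c, hc⟩ := (Submodule.mem_span_range_iff_exists_fun _).mp hnW
    have hexp : ∀ i : Fin f, c i • b i
        = ∑ u : ↥U₂, algebraMap (ZMod p) A ((c i) u) •
            (MonoidAlgebra.of (ZMod p) G ↑((QuotientGroup.mk u : ↥U₂ ⧸ Hsub).out) • b i) := by
      intro i
      conv_lhs => rw [← aux_sum_single_ma (c i)]
      rw [hsm, map_sum, Finset.sum_smul]
      refine Finset.sum_congr rfl fun u _ => ?_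
      have h1 : φ (MonoidAlgebra.single u ((c i) u))
          = algebraMap (ZMod p) A ((c i) u) * MonoidAlgebra.of (ZMod p) G ↑u := by
        rw [hφ, aux_mapdom p G U₂ u ((c i) u)]
        exact MonoidAlgebra.single_eq_algebraMap_mul_of _ _
      rw [h1, mul_smul, hrep u (b i)]
    refine ⟨fun ji : (↥U₂ ⧸ Hsub) × Fin f =>
      ∑ u ∈ Finset.univ.filter (fun u : ↥U₂ => (QuotientGroup.mk u : ↥U₂ ⧸ Hsub) = ji.1),
        (c ji.2) u, ?_⟩
    calc (∑ ji : (↥U₂ ⧸ Hsub) × Fin f, algebraMap (ZMod p) A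
            (∑ u ∈ Finset.univ.filter (fun u : ↥U₂ => (QuotientGroup.mk u : ↥U₂ ⧸ Hsub) = ji.1),
              (c ji.2) u) • (MonoidAlgebra.of (ZMod p) G ↑(ji.1.out) • b ji.2))
        = ∑ τ : ↥U₂ ⧸ Hsub, ∑ i : Fin f, algebraMap (ZMod p) A
            (∑ u ∈ Finset.univ.filter (fun u : ↥U₂ => (QuotientGroup.mk u : ↥U₂ ⧸ Hsub) = τ),
              (c i) u) • (MonoidAlgebra.of (ZMod p) G ↑(τ.out) • b i) := by
          rw [Fintype.sum_prod_type]
      _ = ∑ i : Fin f, ∑ τ : ↥U₂ ⧸ Hsub, algebraMap (ZMod p) A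
            (∑ u ∈ Finset.univ.filter (fun u : ↥U₂ => (QuotientGroup.mk u : ↥U₂ ⧸ Hsub) = τ),
              (c i) u) • (MonoidAlgebra.of (ZMod p) G ↑(τ.out) • b i) := Finset.sum_comm
      _ = ∑ i : Fin f, ∑ τ : ↥U₂ ⧸ Hsub,
            ∑ u ∈ Finset.univ.filter (fun u : ↥U₂ => (QuotientGroup.mk u : ↥U₂ ⧸ Hsub) = τ),
              algebraMap (ZMod p) A ((c i) u) •
                (MonoidAlgebra.of (ZMod p) G ↑((QuotientGroup.mk u : ↥U₂ ⧸ Hsub).out) • b i) := by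
          refine Finset.sum_congr rfl fun i _ => Finset.sum_congr rfl fun τ _ => ?_
          rw [map_sum, Finset.sum_smul]
          refine Finset.sum_congr rfl fun u hu => ?_
          rw [← (Finset.mem_filter.mp hu).2]
      _ = ∑ i : Fin f, ∑ u : ↥U₂, algebraMap (ZMod p) A ((c i) u) •
              (MonoidAlgebra.of (ZMod p) G ↑((QuotientGroup.mk u : ↥U₂ ⧸ Hsub).out) • b i) := by
          refine Finset.sum_congr rfl fun i _ => ?_
          exact Finset.sum_fiberwise _ _ _
      _ = ∑ i : Fin f, c i • b i := Finset.sum_congr rfl fun i _ => (hexp i).symm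
      _ = n := hc
  have hcard_le : Nat.card (M ⧸ K₁) ≤ p ^ (r * f) := by
    have h1 := Nat.card_le_card_of_surjective Φ hsurj
    have h2 : Nat.card ((↥U₂ ⧸ Hsub) × Fin f → ZMod p) = p ^ (r * f) := by
      rw [Nat.card_fun, Nat.card_prod, Nat.card_zmod]
      simp [hr]
    rwa [h2] at h1
  have hineq : Module.finrank (ZMod p) (RestrictScalars (ZMod p) A (M ⧸ K₁)) ≤ r * f := by
    rw [hc1] at hcard_le
    exact (Nat.pow_le_pow_iff_right hp1).mp hcard_le
  have hmul : U₁.relIndex U₂ * U₂.index = U₁.index := Subgroup.relIndex_mul_index h12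
  have hrel : U₁.relIndex U₂ = r := rfl
  have hi1 : U₁.index ≠ 0 := Subgroup.index_ne_zero_of_finite
  have hi2 : U₂.index ≠ 0 := Subgroup.index_ne_zero_of_finite
  have hnat : Module.finrank (ZMod p) (RestrictScalars (ZMod p) A (M ⧸ K₁)) * U₂.index
      ≤ Module.finrank (ZMod p) (RestrictScalars (ZMod p) A (M ⧸ K₂)) * U₁.index := by
    calc Module.finrank (ZMod p) (RestrictScalars (ZMod p) A (M ⧸ K₁)) * U₂.index
        ≤ (r * Module.finrank (ZMod p) (RestrictScalars (ZMod p) A (M ⧸ K₂))) * U₂.index := by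
          refine Nat.mul_le_mul_right _ ?_
          rw [← hfd2]
          exact hineq
      _ = Module.finrank (ZMod p) (RestrictScalars (ZMod p) A (M ⧸ K₂)) * (r * U₂.index) := by
          ring
      _ = _ := by rw [← hrel, hmul]
  unfold normCoinvDim
  rw [div_le_div_iff₀ (by exact_mod_cast Nat.pos_of_ne_zero hi1)
    (by exact_mod_cast Nat.pos_of_ne_zero hi2)]
  exact_mod_cast hnat
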